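/- Let Z be a standard normal random variable, b ∈ ℝ, and set Y = Z − E[Z | Z ≤ b] (so E[Y | Z ≤ b] = 0 and the conditional variance of Y given {Z ≤ b} equals V(b) = Var(Z | Z ≤ b)). Then for every u > 0, log E[exp(uY) | Z ≤ b] ≤ (u²/2)·V(b). -/

import Mathlib

open Real MeasureTheory Set Filter Topology

/-- The standard normal density `φ(t) = exp(-t²/2)/√(2π)`. -/
noncomputable def stdPhi (t : ℝ) : ℝ := Real.exp (-t ^ 2 / 2) / Real.sqrt (2 * Real.pi)

/-- The standard normal CDF `Φ(t) = ∫_{-∞}^t φ(s) ds`. -/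
noncomputable def stdCDF (t : ℝ) : ℝ := ∫ s in Set.Iic t, stdPhi s

/-- The conditional mean `E[Z | Z ≤ b] = (1/Φ(b)) ∫_{-∞}^b z φ(z) dz`. -/
noncomputable def truncMean (b : ℝ) : ℝ :=
  (stdCDF b)⁻¹ * ∫ z in Set.Iic b, z * stdPhi z

/-- The variance of a standard normal truncated from above at `b`:
`V(b) = E[Z² | Z ≤ b] - (E[Z | Z ≤ b])²`. -/
noncomputable def truncVar (b : ℝ) : ℝ :=
  (stdCDF b)⁻¹ * (∫ z in Set.Iic b, z ^ 2 * stdPhi z) - (truncMean b) ^ 2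



lemma sqrt_two_pi_pos : 0 < Real.sqrt (2 * Real.pi) :=
  Real.sqrt_pos.2 (by positivity)

lemma stdPhi_pos (t : ℝ) : 0 < stdPhi t :=
  div_pos (Real.exp_pos _) sqrt_two_pi_pos

lemma stdPhi_cont : Continuous stdPhi := by
  unfold stdPhi; fun_prop

lemma hasDerivAt_stdPhi (t : ℝ) : HasDerivAt stdPhi (-t * stdPhi t) t := by
  have h1 : HasDerivAt (fun t : ℝ => -t ^ 2 / 2) (-t) t := by
    have := ((hasDerivAt_pow 2 t).neg).div_const 2
    simpa using this.congr_deriv (by ring)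
  have h2 := (h1.exp).div_const (Real.sqrt (2 * Real.pi))
  unfold stdPhi
  exact h2.congr_deriv (by ring)

lemma stdPhi_integrable : Integrable stdPhi := by
  have h : Integrable (fun x : ℝ => Real.exp (-(1/2 : ℝ) * x ^ 2)) :=
    integrable_exp_neg_mul_sq (by norm_num)
  have := h.div_const (Real.sqrt (2 * Real.pi))
  refine this.congr (Eventually.of_forall fun x => ?_)
  unfold stdPhi; ring_nf

lemma integrable_id_mul_stdPhi : Integrable (fun t : ℝ => t * stdPhi t) := by
  have h : Integrable (fun x : ℝ => x * Real.exp (-(1/2 : ℝ) * x ^ 2)) :=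
    integrable_mul_exp_neg_mul_sq (by norm_num)
  have := h.div_const (Real.sqrt (2 * Real.pi))
  refine this.congr (Eventually.of_forall fun x => ?_)
  unfold stdPhi; ring_nf

lemma integrable_sq_mul_stdPhi : Integrable (fun t : ℝ => t ^ 2 * stdPhi t) := by
  have h : Integrable (fun x : ℝ => x ^ (2:ℝ) * Real.exp (-(1/2 : ℝ) * x ^ 2)) :=
    integrable_rpow_mul_exp_neg_mul_sq (b := 1/2) (s := 2) (by norm_num) (by norm_num)
  have := h.div_const (Real.sqrt (2 * Real.pi))
  refine this.congr (Eventually.of_forall fun x => ?_)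
  have hx : x ^ (2:ℝ) = x ^ 2 := by
    rw [show (2:ℝ) = ((2:ℕ):ℝ) by norm_num, Real.rpow_natCast]
  simp only [hx]; unfold stdPhi; ring_nf

lemma hasDerivAt_stdCDF (t : ℝ) : HasDerivAt stdCDF (stdPhi t) t := by
  have key : ∀ x : ℝ, stdCDF x = stdCDF 0 + ∫ s in (0:ℝ)..x, stdPhi s := by
    intro x
    rw [← intervalIntegral.integral_Iic_sub_Iic stdPhi_integrable.integrableOn
      stdPhi_integrable.integrableOn]
    unfold stdCDF; ring
  have h : HasDerivAt (fun x => stdCDF 0 + ∫ s in (0:ℝ)..x, stdPhi s) (stdPhi t) t := by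
    refine HasDerivAt.const_add _ ?_
    exact intervalIntegral.integral_hasDerivAt_right
      stdPhi_integrable.intervalIntegrable
      (stdPhi_cont.stronglyMeasurableAtFilter _ _) stdPhi_cont.continuousAt
  exact h.congr_of_eventuallyEq (Eventually.of_forall key)

lemma stdCDF_nonneg (t : ℝ) : 0 ≤ stdCDF t :=
  setIntegral_nonneg measurableSet_Iic fun x _ => (stdPhi_pos x).le

lemma stdCDF_mono : Monotone stdCDF :=
  monotone_of_deriv_nonneg (fun t => (hasDerivAt_stdCDF t).differentiableAt)
    (fun t => by rw [(hasDerivAt_stdCDF t).deriv]; exact (stdPhi_pos t).le)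

lemma stdCDF_pos (t : ℝ) : 0 < stdCDF t := by
  have h : stdCDF t - stdCDF (t - 1) = ∫ s in (t-1)..t, stdPhi s :=
    intervalIntegral.integral_Iic_sub_Iic stdPhi_integrable.integrableOn
      stdPhi_integrable.integrableOn
  have hpos : 0 < ∫ s in (t-1)..t, stdPhi s := by
    apply intervalIntegral.intervalIntegral_pos_of_pos_on
      (stdPhi_integrable.intervalIntegrable)
      (fun x _ => stdPhi_pos x) (by linarith)
  nlinarith [stdCDF_nonneg (t - 1)]

lemma stdPhi_even (t : ℝ) : stdPhi (-t) = stdPhi t := by unfold stdPhi; ring_nf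

lemma tendsto_pow_mul_stdPhi_atTop (n : ℕ) :
    Tendsto (fun t : ℝ => t ^ n * stdPhi t) atTop (𝓝 0) := by
  have key : Tendsto (fun x : ℝ => x ^ n * Real.exp (-x)) atTop (𝓝 0) :=
    tendsto_pow_mul_exp_neg_atTop_nhds_zero n
  have hsq : Tendsto (fun x : ℝ => (x ^ n * Real.exp (-x)) / Real.sqrt (2 * Real.pi))
      atTop (𝓝 0) := by simpa using key.div_const (Real.sqrt (2 * Real.pi))
  apply squeeze_zero_norm' _ hsq
  filter_upwards [eventually_ge_atTop (2:ℝ)] with x hx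
  have hx0 : (0:ℝ) ≤ x := by linarith
  have h1 : Real.exp (-x ^ 2 / 2) ≤ Real.exp (-x) :=
    Real.exp_le_exp.2 (by nlinarith)
  have h2 : x ^ n * stdPhi x ≤ x ^ n * Real.exp (-x) / Real.sqrt (2 * Real.pi) := by
    unfold stdPhi
    rw [mul_div_assoc]
    have hs : 0 < Real.sqrt (2 * Real.pi) := Real.sqrt_pos.2 (by positivity)
    exact mul_le_mul_of_nonneg_left ((div_le_div_iff_of_pos_right hs).2 h1) (by positivity)
  have h3 : 0 ≤ x ^ n * stdPhi x := by
    have := (stdPhi_pos x).le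
    positivity
  rw [Real.norm_eq_abs, abs_of_nonneg h3]
  exact h2

lemma tendsto_pow_mul_stdPhi (n : ℕ) :
    Tendsto (fun t : ℝ => t ^ n * stdPhi t) atBot (𝓝 0) := by
  have h := ((tendsto_pow_mul_stdPhi_atTop n).comp tendsto_neg_atBot_atTop).const_mul ((-1:ℝ)^n)
  rw [mul_zero] at h
  refine h.congr fun t => ?_
  simp only [Function.comp]
  rw [stdPhi_even, ← mul_assoc, ← mul_pow]
  norm_num

lemma tendsto_stdPhi : Tendsto stdPhi atBot (𝓝 0) := by
  simpa using tendsto_pow_mul_stdPhi 0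

lemma integral_id_mul_stdPhi (b : ℝ) :
    ∫ z in Set.Iic b, z * stdPhi z = -stdPhi b := by
  have h := integral_Iic_of_hasDerivAt_of_tendsto' (a := b) (m := 0)
    (f := fun t => -stdPhi t) (f' := fun z => z * stdPhi z)
    (fun x _ => by exact (hasDerivAt_stdPhi x).neg.congr_deriv (by ring))
    integrable_id_mul_stdPhi.integrableOn (by simpa using tendsto_stdPhi.neg)
  simpa using h

lemma stdCDF_le_of_neg {t : ℝ} (ht : t < 0) : stdCDF t ≤ stdPhi t / (-t) := by
  have hmono : ∀ s ∈ Set.Iic t, stdPhi s ≤ (1/t) * (s * stdPhi s) := by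
    intro s hs
    have hs' : s ≤ t := hs
    have h1 : 1 ≤ s / t := (le_div_iff_of_neg ht).2 (by linarith : s ≤ 1 * t)
    have := mul_le_mul_of_nonneg_right h1 (stdPhi_pos s).le
    calc stdPhi s = 1 * stdPhi s := by ring
      _ ≤ (s / t) * stdPhi s := this
      _ = (1/t) * (s * stdPhi s) := by ring
  have hint : IntegrableOn (fun s => (1/t) * (s * stdPhi s)) (Set.Iic t) :=
    (integrable_id_mul_stdPhi.integrableOn).const_mul _
  have h := setIntegral_mono_on stdPhi_integrable.integrableOn hint measurableSet_Iic hmono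
  rw [integral_const_mul, integral_id_mul_stdPhi] at h
  calc stdCDF t ≤ (1/t) * (-stdPhi t) := h
    _ = stdPhi t / (-t) := by ring

lemma tendsto_stdCDF : Tendsto stdCDF atBot (𝓝 0) := by
  refine squeeze_zero_norm' ?_ tendsto_stdPhi
  · filter_upwards [eventually_le_atBot (-1:ℝ)] with t ht
    have ht0 : t < 0 := by linarith
    rw [Real.norm_eq_abs, abs_of_nonneg (stdCDF_nonneg t)]
    calc stdCDF t ≤ stdPhi t / (-t) := stdCDF_le_of_neg ht0
      _ ≤ stdPhi t / 1 := by
          apply div_le_div_of_nonneg_left (stdPhi_pos t).le one_pos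
          linarith
      _ = stdPhi t := by ring

lemma tendsto_pow_mul_stdCDF (n : ℕ) :
    Tendsto (fun t : ℝ => t ^ (n+1) * stdCDF t) atBot (𝓝 0) := by
  have habs : Tendsto (fun t : ℝ => |t ^ n * stdPhi t|) atBot (𝓝 0) := by
    simpa using (tendsto_pow_mul_stdPhi n).abs
  refine squeeze_zero_norm' ?_ habs
  · filter_upwards [eventually_le_atBot (-1:ℝ)] with t ht
    have ht0 : t < 0 := by linarith
    have h1 : stdCDF t ≤ stdPhi t / (-t) := stdCDF_le_of_neg ht0
    rw [Real.norm_eq_abs, abs_mul, abs_mul, abs_pow, abs_pow]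
    have h2 : |stdCDF t| ≤ stdPhi t / (-t) := by
      rw [abs_of_nonneg (stdCDF_nonneg t)]; exact h1
    calc |t| ^ (n+1) * |stdCDF t| ≤ |t| ^ (n+1) * (stdPhi t / (-t)) := by
          exact mul_le_mul_of_nonneg_left h2 (by positivity)
      _ = |t| ^ n * (|t| * (stdPhi t / (-t))) := by ring
      _ = |t| ^ n * stdPhi t := by
          rw [abs_of_neg ht0]
          rw [mul_comm (-t) (stdPhi t / -t), div_mul_cancel₀ _ (by linarith : (-t) ≠ 0)]
      _ = |t| ^ n * |stdPhi t| := by rw [abs_of_pos (stdPhi_pos t)]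

lemma integral_sq_mul_stdPhi (b : ℝ) :
    ∫ z in Set.Iic b, z ^ 2 * stdPhi z = stdCDF b - b * stdPhi b := by
  have h := integral_Iic_of_hasDerivAt_of_tendsto' (a := b) (m := 0)
    (f := fun t => stdCDF t - t * stdPhi t) (f' := fun z => z ^ 2 * stdPhi z)
    (fun x _ => by
      have := (hasDerivAt_stdCDF x).sub ((hasDerivAt_id x).mul (hasDerivAt_stdPhi x))
      simp only [id_eq] at this
      exact this.congr_deriv (by ring))
    integrable_sq_mul_stdPhi.integrableOn
    (by
      have h1 := tendsto_stdCDF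
      have h2 : Tendsto (fun t : ℝ => t * stdPhi t) atBot (𝓝 0) := by
        simpa using tendsto_pow_mul_stdPhi 1
      simpa using h1.sub h2)
  simpa using h

noncomputable def sA (t : ℝ) : ℝ := t * stdCDF t + stdPhi t
noncomputable def sN (t : ℝ) : ℝ := sA t ^ 2 + sA t * stdPhi t - stdCDF t ^ 2
noncomputable def sJ (t : ℝ) : ℝ :=
  2 * sA t * stdCDF t - stdPhi t * stdCDF t - t * sA t * stdPhi t
noncomputable def sK (t : ℝ) : ℝ :=
  2 * stdCDF t ^ 2 + (1 + t ^ 2) * sA t * stdPhi t - stdPhi t ^ 2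
noncomputable def sL (t : ℝ) : ℝ :=
  (5 + t ^ 2) * stdCDF t + (t - t ^ 3) * sA t + 2 * t * stdPhi t
noncomputable def sM (t : ℝ) : ℝ := t * (1 - t ^ 2) * stdCDF t + (2 - t ^ 2) * stdPhi t
noncomputable def sg (t : ℝ) : ℝ := stdCDF t + t * stdPhi t / (t ^ 2 + 1)

lemma hasDerivAt_sA (t : ℝ) : HasDerivAt sA (stdCDF t) t := by
  have h := ((hasDerivAt_id t).mul (hasDerivAt_stdCDF t)).add (hasDerivAt_stdPhi t)
  simp only [id_eq] at h
  exact h.congr_deriv (by ring)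

lemma hasDerivAt_sN (t : ℝ) : HasDerivAt sN (sJ t) t := by
  have h := (((hasDerivAt_sA t).pow 2).add ((hasDerivAt_sA t).mul (hasDerivAt_stdPhi t))).sub
    ((hasDerivAt_stdCDF t).pow 2)
  exact h.congr_deriv (by simp only [sJ, sA]; ring)

lemma hasDerivAt_sJ (t : ℝ) : HasDerivAt sJ (sK t) t := by
  have h := ((((hasDerivAt_sA t).const_mul 2).mul (hasDerivAt_stdCDF t)).sub
      ((hasDerivAt_stdPhi t).mul (hasDerivAt_stdCDF t))).sub
    ((((hasDerivAt_id t).mul (hasDerivAt_sA t)).mul (hasDerivAt_stdPhi t)))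
  simp only [id_eq] at h
  exact h.congr_deriv (by simp only [sK, sA, Pi.mul_apply, id_eq]; ring)

lemma hasDerivAt_sK (t : ℝ) : HasDerivAt sK (stdPhi t * sL t) t := by
  have hpoly : HasDerivAt (fun t : ℝ => 1 + t ^ 2) (2 * t) t := by
    simpa using ((hasDerivAt_pow 2 t).const_add 1)
  have h := (((hasDerivAt_stdCDF t).pow 2).const_mul 2).add
    (((hpoly.mul (hasDerivAt_sA t)).mul (hasDerivAt_stdPhi t)).sub ((hasDerivAt_stdPhi t).pow 2))
  have h' := h.congr_deriv (show _ = stdPhi t * sL t by simp only [sL, sA, Pi.mul_apply]; ring)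
  exact h'.congr_of_eventuallyEq (Eventually.of_forall fun x => by simp only [sK, Pi.add_apply, Pi.mul_apply, Pi.sub_apply, Pi.pow_apply]; ring)

lemma hasDerivAt_sL (t : ℝ) : HasDerivAt sL (4 * sM t) t := by
  have h1 : HasDerivAt (fun t : ℝ => 5 + t ^ 2) (2 * t) t := by
    simpa using ((hasDerivAt_pow 2 t).const_add 5)
  have h2 : HasDerivAt (fun t : ℝ => t - t ^ 3) (1 - 3 * t ^ 2) t := by
    exact ((hasDerivAt_id' t).sub (hasDerivAt_pow 3 t)).congr_deriv (by norm_num)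
  have h := ((h1.mul (hasDerivAt_stdCDF t)).add (h2.mul (hasDerivAt_sA t))).add
    (((hasDerivAt_id t).const_mul 2).mul (hasDerivAt_stdPhi t))
  simp only [id_eq] at h
  exact h.congr_deriv (by simp only [sM, sA]; ring)

lemma hasDerivAt_sg (t : ℝ) :
    HasDerivAt sg (2 * stdPhi t / (t ^ 2 + 1) ^ 2) t := by
  have hden : HasDerivAt (fun t : ℝ => t ^ 2 + 1) (2 * t) t := by
    simpa using ((hasDerivAt_pow 2 t).add_const 1)
  have hne : (t : ℝ) ^ 2 + 1 ≠ 0 := by positivity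
  have hnum : HasDerivAt (fun t : ℝ => t * stdPhi t) (stdPhi t + t * (-t * stdPhi t)) t := by
    exact ((hasDerivAt_id' t).mul (hasDerivAt_stdPhi t)).congr_deriv (by ring)
  have h := (hasDerivAt_stdCDF t).add (hnum.div hden hne)
  refine h.congr_deriv ?_
  field_simp
  ring

lemma nonneg_of_deriv_nonneg_tendsto {F F' : ℝ → ℝ} (hd : ∀ t, HasDerivAt F (F' t) t)
    {c : ℝ} (h' : ∀ s, s ≤ c → 0 ≤ F' s) (h0 : Tendsto F atBot (𝓝 0))
    {t : ℝ} (ht : t ≤ c) : 0 ≤ F t := by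
  have hmono : MonotoneOn F (Iic c) := by
    apply monotoneOn_of_deriv_nonneg (convex_Iic c)
      (fun x _ => (hd x).continuousAt.continuousWithinAt)
      (fun x _ => (hd x).differentiableAt.differentiableWithinAt)
    intro x hx
    rw [(hd x).deriv]
    exact h' x (le_of_lt (by simpa using hx))
  refine le_of_tendsto h0 ?_
  filter_upwards [eventually_le_atBot t] with s hs
  exact hmono (le_trans hs ht) ht hs

lemma tendsto_sA : Tendsto sA atBot (𝓝 0) := by
  have h := (tendsto_pow_mul_stdCDF 0).add tendsto_stdPhi
  rw [add_zero] at h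
  exact h.congr (fun t => by simp [sA])

lemma tendsto_sN : Tendsto sN atBot (𝓝 0) := by
  have h := ((tendsto_sA.pow 2).add (tendsto_sA.mul tendsto_stdPhi)).sub (tendsto_stdCDF.pow 2)
  simp at h; exact h

lemma tendsto_sJ : Tendsto sJ atBot (𝓝 0) := by
  have h := (((tendsto_sA.const_mul 2).mul tendsto_stdCDF).sub
      (tendsto_stdPhi.mul tendsto_stdCDF)).sub
    (((tendsto_pow_mul_stdCDF 1).mul tendsto_stdPhi).add
      ((tendsto_pow_mul_stdPhi 1).mul tendsto_stdPhi))
  simp only [mul_zero, zero_mul, sub_zero, zero_sub, add_zero, neg_zero, zero_add] at h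
  refine h.congr (fun t => ?_)
  simp only [sJ, sA]
  ring

lemma tendsto_sK : Tendsto sK atBot (𝓝 0) := by
  have h := ((tendsto_stdCDF.pow 2).const_mul 2).add
    (((tendsto_sA.mul tendsto_stdPhi).add
      (((tendsto_pow_mul_stdCDF 2).mul tendsto_stdPhi).add
        ((tendsto_pow_mul_stdPhi 2).mul tendsto_stdPhi))).sub (tendsto_stdPhi.pow 2))
  norm_num at h
  refine h.congr (fun t => ?_)
  simp only [sK, sA]
  ring

lemma tendsto_sL : Tendsto sL atBot (𝓝 0) := by
  have h := (((tendsto_stdCDF.const_mul 5).add (tendsto_pow_mul_stdCDF 1)).add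
      ((((tendsto_pow_mul_stdCDF 1).add (tendsto_pow_mul_stdPhi 1)).sub
        ((tendsto_pow_mul_stdCDF 3).add (tendsto_pow_mul_stdPhi 3))))).add
    ((tendsto_pow_mul_stdPhi 1).const_mul 2)
  simp only [mul_zero, zero_mul, sub_zero, zero_sub, add_zero, neg_zero, zero_add, sub_self] at h
  refine h.congr (fun t => ?_)
  simp only [sL, sA]
  ring

lemma tendsto_sg : Tendsto sg atBot (𝓝 0) := by
  have h2 : Tendsto (fun t : ℝ => t * stdPhi t / (t ^ 2 + 1)) atBot (𝓝 0) := by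
    have habs : Tendsto (fun t : ℝ => |t ^ 1 * stdPhi t|) atBot (𝓝 0) := by
      simpa using (tendsto_pow_mul_stdPhi 1).abs
    refine squeeze_zero_norm' ?_ habs
    filter_upwards with t
    rw [Real.norm_eq_abs, abs_div]
    have h1 : (1:ℝ) ≤ |t ^ 2 + 1| := by
      rw [abs_of_pos (by positivity)]
      nlinarith [sq_nonneg t]
    calc |t * stdPhi t| / |t ^ 2 + 1| ≤ |t * stdPhi t| / 1 :=
          div_le_div_of_nonneg_left (abs_nonneg _) one_pos h1
      _ = |t ^ 1 * stdPhi t| := by rw [div_one, pow_one]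
  have h := tendsto_stdCDF.add h2
  rw [add_zero] at h
  exact h.congr (fun t => by simp [sg])

lemma sg_nonneg (t : ℝ) : 0 ≤ sg t := by
  refine nonneg_of_deriv_nonneg_tendsto hasDerivAt_sg (c := t) ?_ tendsto_sg le_rfl
  intro s _
  have := (stdPhi_pos s).le
  positivity

lemma integral_stdPhi_total : ∫ t, stdPhi t = 1 := by
  have h : ∫ x : ℝ, Real.exp (-(1/2 : ℝ) * x ^ 2) = Real.sqrt (π / (1/2)) :=
    integral_gaussian (1/2)
  have h2 : ∫ t, stdPhi t = (∫ x : ℝ, Real.exp (-(1/2:ℝ) * x ^ 2)) / Real.sqrt (2*π) := by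
    rw [← integral_div]
    congr 1; funext x; unfold stdPhi; ring_nf
  rw [h2, h, show π / (1/2 : ℝ) = 2*π by ring]
  have : Real.sqrt (2*π) ≠ 0 := by positivity
  field_simp

lemma stdCDF_zero : stdCDF 0 = 1/2 := by
  have hsplit : stdCDF 0 + ∫ t in Set.Ioi (0:ℝ), stdPhi t = 1 := by
    rw [← integral_stdPhi_total]
    exact intervalIntegral.integral_Iic_add_Ioi stdPhi_integrable.integrableOn
      stdPhi_integrable.integrableOn
  have hsym : ∫ t in Set.Ioi (0:ℝ), stdPhi t = stdCDF 0 := by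
    have heq := integral_comp_neg_Iic (c := (0:ℝ)) stdPhi
    rw [neg_zero] at heq
    rw [← heq]
    unfold stdCDF
    congr 1; funext x
    show stdPhi (-x) = stdPhi x
    unfold stdPhi; ring_nf
  rw [hsym] at hsplit
  linarith

lemma stdCDF_le_half {t : ℝ} (ht : t ≤ 0) : stdCDF t ≤ 1/2 := by
  rw [← stdCDF_zero]; exact stdCDF_mono ht

lemma stdPhi_ge {t : ℝ} (h : t ^ 2 ≤ 1) : 0.195 ≤ stdPhi t := by
  have he : Real.exp 1 < 2.7182818286 := Real.exp_one_lt_d9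
  have hid : Real.exp (1/2 : ℝ) * Real.exp (1/2 : ℝ) = Real.exp 1 := by
    rw [← Real.exp_add]; norm_num
  have h2 : Real.exp (1/2 : ℝ) ≤ 1.65 := by nlinarith [Real.exp_pos (1/2 : ℝ)]
  have h3 : (0.6 : ℝ) ≤ Real.exp (-(1:ℝ)/2) := by
    rw [show (-(1:ℝ)/2) = -(1/2 : ℝ) by norm_num, Real.exp_neg]
    have hp := Real.exp_pos (1/2 : ℝ)
    have hinv : (Real.exp (1/2 : ℝ))⁻¹ * Real.exp (1/2 : ℝ) = 1 :=
      inv_mul_cancel₀ (ne_of_gt hp)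
    nlinarith
  have h4 : Real.exp (-(1:ℝ)/2) ≤ Real.exp (-t^2/2) := Real.exp_le_exp.2 (by linarith)
  have hsq : Real.sqrt (2*π) ≤ 2.51 := by
    rw [show (2.51:ℝ) = Real.sqrt (2.51^2) from (Real.sqrt_sq (by norm_num)).symm]
    apply Real.sqrt_le_sqrt
    nlinarith [Real.pi_lt_d2]
  have hsqpos : (0:ℝ) < Real.sqrt (2*π) := Real.sqrt_pos.2 (by positivity)
  unfold stdPhi
  rw [le_div_iff₀ hsqpos]
  nlinarith

lemma sM_nonneg {t : ℝ} (ht : t ≤ 0) : 0 ≤ sM t := by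
  have hne : (0:ℝ) < t ^ 2 + 1 := by positivity
  rcases le_or_gt t (-1) with h1 | h1
  · -- Mills ratio case
    have h3 := mul_nonneg hne.le (sg_nonneg t)
    have h4 : (t ^ 2 + 1) * sg t = (t ^ 2 + 1) * stdCDF t + t * stdPhi t := by
      simp only [sg]
      field_simp
    rw [h4] at h3
    -- key : 0 ≤ (t^2+1)*Φ + t*φ
    have hc : 0 ≤ t * (1 - t ^ 2) := by nlinarith
    have h5 := mul_le_mul_of_nonneg_left h3 hc
    simp only [sM]
    nlinarith [stdPhi_pos t, mul_pos hne (stdPhi_pos t)]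
  · -- -1 < t ≤ 0
    have hphi : (0.195:ℝ) ≤ stdPhi t := stdPhi_ge (by nlinarith)
    have hhalf : stdCDF t ≤ 1/2 := stdCDF_le_half ht
    have hc : t * (1 - t ^ 2) ≤ 0 := by nlinarith
    have h5 : t * (1 - t ^ 2) * (1/2) ≤ t * (1 - t ^ 2) * stdCDF t :=
      mul_le_mul_of_nonpos_left hhalf hc
    have hcube : (0:ℝ) ≤ (t + 0.5774) ^ 2 * (1.1548 - t) :=
      mul_nonneg (sq_nonneg _) (by linarith)
    have h7 : -(0.193:ℝ) ≤ t * (1 - t ^ 2) * (1/2) := by nlinarith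
    have h6 : (0.195:ℝ) ≤ (2 - t ^ 2) * stdPhi t := by
      calc (0.195:ℝ) = 1 * 0.195 := by norm_num
        _ ≤ (2 - t ^ 2) * stdPhi t :=
            mul_le_mul (by nlinarith) hphi (by norm_num) (by nlinarith)
    simp only [sM]
    linarith

lemma sL_nonneg {t : ℝ} (ht : t ≤ 0) : 0 ≤ sL t :=
  nonneg_of_deriv_nonneg_tendsto hasDerivAt_sL (c := 0)
    (fun s hs => by nlinarith [sM_nonneg hs]) tendsto_sL ht

lemma sK_nonneg (t : ℝ) : 0 ≤ sK t := by
  rcases le_or_gt t 0 with ht | ht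
  · exact nonneg_of_deriv_nonneg_tendsto hasDerivAt_sK (c := 0)
      (fun s hs => mul_nonneg (stdPhi_pos s).le (sL_nonneg hs)) tendsto_sK ht
  · have hA : stdPhi t ≤ sA t := by
      simp only [sA]
      nlinarith [mul_nonneg ht.le (stdCDF_nonneg t)]
    simp only [sK]
    nlinarith [stdPhi_pos t, sq_nonneg t, stdCDF_nonneg t,
      mul_le_mul_of_nonneg_right hA (stdPhi_pos t).le,
      mul_nonneg (mul_nonneg (sq_nonneg t) (stdPhi_pos t).le) (stdPhi_pos t).le,
      mul_nonneg (mul_nonneg (mul_nonneg (sq_nonneg t) ht.le) (stdCDF_nonneg t)) (stdPhi_pos t).le]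

lemma sJ_nonneg (t : ℝ) : 0 ≤ sJ t :=
  nonneg_of_deriv_nonneg_tendsto hasDerivAt_sJ (c := t)
    (fun s _ => sK_nonneg s) tendsto_sJ le_rfl

lemma sN_nonneg (t : ℝ) : 0 ≤ sN t :=
  nonneg_of_deriv_nonneg_tendsto hasDerivAt_sN (c := t)
    (fun s _ => sJ_nonneg s) tendsto_sN le_rfl

/-- The function `k(t) = (t φ Φ + φ²)/Φ²`. -/
noncomputable def sk (t : ℝ) : ℝ :=
  (t * stdPhi t * stdCDF t + stdPhi t ^ 2) / stdCDF t ^ 2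

lemma hasDerivAt_sk (t : ℝ) :
    HasDerivAt sk (-(stdPhi t * sN t) / stdCDF t ^ 3) t := by
  have hΦ : stdCDF t ≠ 0 := (stdCDF_pos t).ne'
  have hnum : HasDerivAt (fun t : ℝ => t * stdPhi t * stdCDF t + stdPhi t ^ 2)
      ((stdPhi t + t * (-t * stdPhi t)) * stdCDF t + (t * stdPhi t) * stdPhi t
        + 2 * stdPhi t * (-t * stdPhi t)) t := by
    have h1 := ((hasDerivAt_id t).mul (hasDerivAt_stdPhi t)).mul (hasDerivAt_stdCDF t)
    have h2 := (hasDerivAt_stdPhi t).pow 2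
    have := h1.add h2
    simp only [id_eq] at this
    exact this.congr_deriv (by simp only [Pi.mul_apply, id_eq]; ring)
  have hden : HasDerivAt (fun t : ℝ => stdCDF t ^ 2) (2 * stdCDF t * stdPhi t) t := by
    have := (hasDerivAt_stdCDF t).pow 2
    exact this.congr_deriv (by ring)
  have h := hnum.div hden (pow_ne_zero 2 hΦ)
  refine h.congr_deriv ?_
  simp only [sN, sA]
  field_simp
  ring

lemma sk_antitone : Antitone sk := by
  apply antitone_of_deriv_nonpos (fun t => (hasDerivAt_sk t).differentiableAt)
  intro t
  rw [(hasDerivAt_sk t).deriv]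
  apply div_nonpos_of_nonpos_of_nonneg
  · simp only [neg_nonpos]
    exact mul_nonneg (stdPhi_pos t).le (sN_nonneg t)
  · exact pow_nonneg (stdCDF_nonneg t) 3

lemma exp_mul_stdPhi_eq (u z : ℝ) :
    Real.exp (u ^ 2 / 2) * stdPhi (z - u) = Real.exp (u * z) * stdPhi z := by
  unfold stdPhi
  rw [mul_div_assoc', mul_div_assoc', ← Real.exp_add, ← Real.exp_add]
  congr 2
  ring

lemma integrable_exp_mul_stdPhi (u : ℝ) :
    Integrable (fun z => Real.exp (u * z) * stdPhi z) := by
  have h : Integrable (fun z : ℝ => Real.exp (u ^ 2 / 2) * stdPhi (z - u)) :=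
    (stdPhi_integrable.comp_sub_right u).const_mul _
  exact h.congr (Eventually.of_forall fun z => exp_mul_stdPhi_eq u z)

lemma integral_exp_mul_stdPhi (u b : ℝ) :
    ∫ z in Set.Iic b, Real.exp (u * z) * stdPhi z
      = Real.exp (u ^ 2 / 2) * stdCDF (b - u) := by
  have hlim : Tendsto (fun t : ℝ => Real.exp (u ^ 2 / 2) * stdCDF (t - u)) atBot (𝓝 0) := by
    have h1 : Tendsto (fun t : ℝ => t - u) atBot atBot :=
      tendsto_atBot_add_const_right atBot (-u) tendsto_id |>.congr (fun t => by simp only [id_eq]; ring)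
    have := (tendsto_stdCDF.comp h1).const_mul (Real.exp (u ^ 2 / 2))
    simpa using this
  have h := integral_Iic_of_hasDerivAt_of_tendsto' (a := b) (m := 0)
    (f := fun t => Real.exp (u ^ 2 / 2) * stdCDF (t - u))
    (f' := fun z => Real.exp (u * z) * stdPhi z)
    (fun x _ => by
      have h1 : HasDerivAt (fun t : ℝ => t - u) 1 x := (hasDerivAt_id x).sub_const u
      have h2 := ((hasDerivAt_stdCDF (x - u)).comp x h1).const_mul (Real.exp (u ^ 2 / 2))
      refine HasDerivAt.congr_deriv h2 ?_
      rw [mul_one, exp_mul_stdPhi_eq u x])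
    (integrable_exp_mul_stdPhi u).integrableOn hlim
  simpa using h

lemma hasDerivAt_sh (t : ℝ) :
    HasDerivAt (fun t => stdPhi t / stdCDF t) (-sk t) t := by
  have h := (hasDerivAt_stdPhi t).div (hasDerivAt_stdCDF t) (stdCDF_pos t).ne'
  refine h.congr_deriv ?_
  simp only [sk]
  field_simp
  ring

noncomputable def sG (b v : ℝ) : ℝ :=
  Real.log (stdCDF (b - v)) - Real.log (stdCDF b)
    + v * (stdPhi b / stdCDF b) + v ^ 2 / 2 * sk b

noncomputable def sG1 (b v : ℝ) : ℝ :=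
  -(stdPhi (b - v) / stdCDF (b - v)) + stdPhi b / stdCDF b + v * sk b

lemma hasDerivAt_sG (b v : ℝ) : HasDerivAt (sG b) (sG1 b v) v := by
  have h1 : HasDerivAt (fun v : ℝ => b - v) (-1) v := by
    simpa using (hasDerivAt_id v).const_sub b
  have h2 := (hasDerivAt_stdCDF (b - v)).comp v h1
  simp only [Function.comp_def, Function.comp_apply] at h2
  have h3 := h2.log (stdCDF_pos (b - v)).ne'
  have h4 : HasDerivAt (fun v : ℝ => v * (stdPhi b / stdCDF b)) (stdPhi b / stdCDF b) v := by
    simpa using (hasDerivAt_id v).mul_const (stdPhi b / stdCDF b)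
  have h5 : HasDerivAt (fun v : ℝ => v ^ 2 / 2 * sk b) (v * sk b) v := by
    have := ((hasDerivAt_pow 2 v).div_const 2).mul_const (sk b)
    refine this.congr_deriv ?_
    ring
  have h := ((h3.sub_const (Real.log (stdCDF b))).add h4).add h5
  refine h.congr_deriv ?_
  simp only [sG1]
  ring

lemma hasDerivAt_sG1 (b v : ℝ) : HasDerivAt (sG1 b) (sk b - sk (b - v)) v := by
  have h1 : HasDerivAt (fun v : ℝ => b - v) (-1) v := by
    simpa using (hasDerivAt_id v).const_sub b
  have h2 := ((hasDerivAt_sh (b - v)).comp v h1).neg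
  simp only [Function.comp_def, Function.comp_apply] at h2
  have h4 : HasDerivAt (fun v : ℝ => v * sk b) (sk b) v := by
    simpa using (hasDerivAt_id v).mul_const (sk b)
  have h := (h2.add_const (stdPhi b / stdCDF b)).add h4
  refine h.congr_deriv ?_
  ring

lemma sG1_nonpos (b : ℝ) {u v : ℝ} (hv : v ∈ Icc 0 u) : sG1 b v ≤ 0 := by
  have hanti : AntitoneOn (sG1 b) (Icc 0 u) := by
    apply antitoneOn_of_deriv_nonpos (convex_Icc 0 u)
      (fun x _ => (hasDerivAt_sG1 b x).continuousAt.continuousWithinAt)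
      (fun x _ => (hasDerivAt_sG1 b x).differentiableAt.differentiableWithinAt)
    intro x hx
    rw [(hasDerivAt_sG1 b x).deriv]
    rw [interior_Icc] at hx
    have : b - x ≤ b := by linarith [hx.1]
    linarith [sk_antitone this]
  have h0 : sG1 b 0 = 0 := by simp [sG1]
  have := hanti (left_mem_Icc.2 (hv.1.trans hv.2)) hv hv.1
  rw [h0] at this
  exact this

lemma sG_nonpos (b : ℝ) {u : ℝ} (hu : 0 ≤ u) : sG b u ≤ 0 := by
  have hanti : AntitoneOn (sG b) (Icc 0 u) := by
    apply antitoneOn_of_deriv_nonpos (convex_Icc 0 u)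
      (fun x _ => (hasDerivAt_sG b x).continuousAt.continuousWithinAt)
      (fun x _ => (hasDerivAt_sG b x).differentiableAt.differentiableWithinAt)
    intro x hx
    rw [(hasDerivAt_sG b x).deriv]
    rw [interior_Icc] at hx
    exact sG1_nonpos b ⟨hx.1.le, hx.2.le⟩
  have h0 : sG b 0 = 0 := by simp [sG]
  have := hanti (left_mem_Icc.2 hu) (right_mem_Icc.2 hu) hu
  rw [h0] at this
  exact this


/-- **Cumulant generating function bound.** Let `Z` be standard normal, `b ∈ ℝ`, and
`Y = Z - E[Z | Z ≤ b]` (so `E[Y | Z ≤ b] = 0` and `Var(Y | Z ≤ b) = V(b)`). Then for every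
`u > 0`, `log E[exp(uY) | Z ≤ b] ≤ (u²/2) V(b)`, where
`E[f(Z) | Z ≤ b] = (1/Φ(b)) ∫_{-∞}^b f(z) φ(z) dz`. -/
theorem stmt15 (b u : ℝ) (hu : 0 < u) :
    Real.log ((stdCDF b)⁻¹ *
        ∫ z in Set.Iic b, Real.exp (u * (z - truncMean b)) * stdPhi z)
      ≤ u ^ 2 / 2 * truncVar b := by
  have hΦb := stdCDF_pos b
  have hΦbu := stdCDF_pos (b - u)
  have hm : truncMean b = -(stdPhi b / stdCDF b) := by
    unfold truncMean
    rw [integral_id_mul_stdPhi]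
    field_simp
  have hI : ∫ z in Set.Iic b, Real.exp (u * (z - truncMean b)) * stdPhi z
      = Real.exp (-(u * truncMean b)) * (Real.exp (u ^ 2 / 2) * stdCDF (b - u)) := by
    rw [← integral_exp_mul_stdPhi u b, ← integral_const_mul]
    congr 1; funext z
    rw [show u * (z - truncMean b) = -(u * truncMean b) + u * z by ring, Real.exp_add, mul_assoc]
  have hsk : sk b = b * (stdPhi b / stdCDF b) + (stdPhi b / stdCDF b) ^ 2 := by
    simp only [sk]
    field_simp
  have hV : truncVar b = 1 - b * (stdPhi b / stdCDF b) - (stdPhi b / stdCDF b) ^ 2 := by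
    unfold truncVar
    rw [integral_sq_mul_stdPhi, hm]
    field_simp
    try ring
  have hlog : Real.log ((stdCDF b)⁻¹ *
      (Real.exp (-(u * truncMean b)) * (Real.exp (u ^ 2 / 2) * stdCDF (b - u))))
      = -Real.log (stdCDF b) + (-(u * truncMean b) + (u ^ 2 / 2 + Real.log (stdCDF (b - u)))) := by
    rw [Real.log_mul (inv_ne_zero hΦb.ne') (by positivity),
      Real.log_mul (Real.exp_ne_zero _) (by positivity),
      Real.log_mul (Real.exp_ne_zero _) hΦbu.ne',
      Real.log_inv, Real.log_exp, Real.log_exp]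
  have hGu : sG b u ≤ 0 := sG_nonpos b hu.le
  have key : (-Real.log (stdCDF b) + (-(u * truncMean b) + (u ^ 2 / 2 + Real.log (stdCDF (b - u)))))
      - u ^ 2 / 2 * truncVar b = sG b u := by
    simp only [sG, hsk, hV, hm]
    ring
  rw [hI, hlog]
  linarith [key, hGu]
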